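/- If a linear map Φ on M_d(ℂ) is d-positive, then it is completely positive (n-positive for all n ≥ 1). -/

import Mathlib

open Matrix ComplexOrder

/-- The ampliation id_k ⊗ Φ of a map Φ on M_d(ℂ). -/
noncomputable def ampliation {d : ℕ} (k : ℕ)
    (Φ : Matrix (Fin d) (Fin d) ℂ → Matrix (Fin d) (Fin d) ℂ)
    (M : Matrix (Fin k × Fin d) (Fin k × Fin d) ℂ) :
    Matrix (Fin k × Fin d) (Fin k × Fin d) ℂ :=
  Matrix.of fun p q => Φ (Matrix.of fun a b => M (p.1, a) (q.1, b)) p.2 q.2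

/-- If a linear map on M_d(ℂ) is d-positive, then it is completely positive. -/
theorem d_positive_implies_completely_positive (d : ℕ)
    (Φ : Matrix (Fin d) (Fin d) ℂ →ₗ[ℂ] Matrix (Fin d) (Fin d) ℂ)
    (hd : ∀ M : Matrix (Fin d × Fin d) (Fin d × Fin d) ℂ,
      M.PosSemidef → (ampliation d (⇑Φ) M).PosSemidef) :
    ∀ n, 1 ≤ n → ∀ M : Matrix (Fin n × Fin d) (Fin n × Fin d) ℂ,
      M.PosSemidef → (ampliation n (⇑Φ) M).PosSemidef := by
  intro n _ M hM
  classical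
  -- the "matrix of matrix units", positive semidefinite
  set E : Matrix (Fin d × Fin d) (Fin d × Fin d) ℂ :=
    Matrix.of fun p q =>
      (if p.1 = p.2 then (1:ℂ) else 0) * (if q.1 = q.2 then (1:ℂ) else 0) with hEdef
  have hE : E.PosSemidef := by
    have : E = (Matrix.of fun (_ : Fin 1) (q : Fin d × Fin d) =>
        (if q.1 = q.2 then (1:ℂ) else 0))ᴴ *
        (Matrix.of fun (_ : Fin 1) (q : Fin d × Fin d) =>
        (if q.1 = q.2 then (1:ℂ) else 0)) := by
      ext p q
      simp [Matrix.mul_apply, hEdef, apply_ite (star : ℂ → ℂ)]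
    rw [this]
    exact Matrix.posSemidef_conjTranspose_mul_self _
  have hP := hd E hE
  set P := ampliation d (⇑Φ) E with hPdef
  obtain ⟨B, hB⟩ : ∃ B : Matrix (Fin n × Fin d) (Fin n × Fin d) ℂ, M = Bᴴ * B := by
    open scoped MatrixOrder in
    exact CStarAlgebra.nonneg_iff_eq_star_mul_self.mp hM.nonneg
  set C : (Fin n × Fin d) → Matrix (Fin n × Fin d) (Fin d × Fin d) ℂ :=
    fun r => Matrix.of fun p q =>
      star (B r (p.1, q.1)) * (if p.2 = q.2 then (1:ℂ) else 0) with hCdef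
  have hPst : ∀ (s t : Fin d) (a b : Fin d),
      P (s, a) (t, b) = Φ (Matrix.single s t 1) a b := by
    intro s t a b
    have : (Matrix.of fun a b => E (s, a) (t, b)) = Matrix.single s t (1:ℂ) := by
      ext a b
      by_cases h1 : s = a <;> by_cases h2 : t = b <;>
        simp [hEdef, Matrix.single, h1, h2]
    simp only [hPdef, ampliation, Matrix.of_apply, this]
  have key : ampliation n (⇑Φ) M = ∑ r, C r * P * (C r)ᴴ := by
    ext ⟨i, a⟩ ⟨j, b⟩
    have hblock : (Matrix.of fun a b => M (i, a) (j, b)) =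
        ∑ r, ∑ s, ∑ t, (star (B r (i, s)) * B r (j, t)) • Matrix.single s t (1:ℂ) := by
      ext a b
      rw [hB]
      simp [Matrix.mul_apply, Matrix.sum_apply, Matrix.single, ite_and, mul_ite]
    simp only [ampliation, Matrix.of_apply, hblock, map_sum, _root_.map_smul,
      Matrix.sum_apply, Matrix.smul_apply, smul_eq_mul]
    refine Finset.sum_congr rfl fun r _ => ?_
    have hrhs : (C r * P * (C r)ᴴ) (i, a) (j, b) =
        ∑ s, ∑ t, star (B r (i, s)) * P (s, a) (t, b) * B r (j, t) := by
      simp [Matrix.mul_apply, Matrix.conjTranspose_apply, hCdef, Fintype.sum_prod_type,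
        Finset.mul_sum, Finset.sum_mul, mul_ite, ite_mul, apply_ite (star : ℂ → ℂ),
        Finset.sum_ite_eq, Finset.sum_ite_eq', mul_assoc]
      exact Finset.sum_comm
    rw [hrhs]
    refine Finset.sum_congr rfl fun s _ => Finset.sum_congr rfl fun t _ => ?_
    rw [hPst]
    ring
  rw [key]
  have : ∀ (s : Finset (Fin n × Fin d)),
      (∑ r ∈ s, C r * P * (C r)ᴴ).PosSemidef := by
    intro s
    induction s using Finset.induction with
    | empty => simpa using Matrix.PosSemidef.zero
    | insert _ _ hx ih =>
      rw [Finset.sum_insert hx]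
      exact (hP.mul_mul_conjTranspose_same _).add ih
  exact this _
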